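/- Consider a maximal forward solution of the shooting system with admissible initial data, defined at least on 0 ≤ ρ < ρ̄ for some finite ρ̄ > 0, and suppose N remains bounded on [0, ρ̄). Then all the dependent variables r, N, w, U, κ, ζ remain bounded on [0, ρ̄), r remains bounded away from 0, and the solution can be continued beyond ρ̄ (i.e. ρ_max > ρ̄). -/

import Mathlib

open Filter Topology Set Real

noncomputable section

/-- The initial energy `E₀ = 1 + 2U₀² − (1 − w₀²)²/r₀²`. -/
def initialEnergy (r₀ w₀ U₀ : ℝ) : ℝ := 1 + 2 * U₀ ^ 2 - (1 - w₀ ^ 2) ^ 2 / r₀ ^ 2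

/-- Admissible initial data `(r₀, w₀, U₀)`: `r₀ > 0`, `|w₀| ≤ 1`, `E₀ ≥ 0`. -/
def Admissible (r₀ w₀ U₀ : ℝ) : Prop :=
  0 < r₀ ∧ |w₀| ≤ 1 ∧ 0 ≤ initialEnergy r₀ w₀ U₀

/-- The forward domain `[0, ρmax) ⊆ ℝ`, for `ρmax ∈ (0, ∞]`. -/
def fwdDom (ρmax : EReal) : Set ℝ := {ρ : ℝ | 0 ≤ ρ ∧ (ρ : EReal) < ρmax}

/-- `(r, N, w, U, κ, ζ)` solves the shooting system on `[0, ρmax)` with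
initial data `(r₀, w₀, U₀)` (and `N(0) = κ(0) = 0`, `ζ(0) = √E₀`),
together with the constraint. -/
structure IsShootingSolOn (r₀ w₀ U₀ : ℝ) (ρmax : EReal)
    (r N w U κ ζ : ℝ → ℝ) : Prop where
  init_r : r 0 = r₀
  init_N : N 0 = 0
  init_w : w 0 = w₀
  init_U : U 0 = U₀
  init_κ : κ 0 = 0
  init_ζ : ζ 0 = Real.sqrt (initialEnergy r₀ w₀ U₀)
  r_pos : ∀ ρ ∈ fwdDom ρmax, 0 < r ρ
  ode_r : ∀ ρ ∈ fwdDom ρmax, HasDerivWithinAt r (r ρ * N ρ) (fwdDom ρmax) ρ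
  ode_N : ∀ ρ ∈ fwdDom ρmax,
      HasDerivWithinAt N (1 - (1 - w ρ ^ 2) ^ 2 / r ρ ^ 2 - κ ρ * N ρ) (fwdDom ρmax) ρ
  ode_w : ∀ ρ ∈ fwdDom ρmax, HasDerivWithinAt w (r ρ * U ρ) (fwdDom ρmax) ρ
  ode_U : ∀ ρ ∈ fwdDom ρmax,
      HasDerivWithinAt U (-(κ ρ - N ρ) * U ρ - w ρ * (1 - w ρ ^ 2) / r ρ) (fwdDom ρmax) ρ
  ode_κ : ∀ ρ ∈ fwdDom ρmax, HasDerivWithinAt κ (1 + 2 * U ρ ^ 2 - κ ρ ^ 2) (fwdDom ρmax) ρ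
  ode_ζ : ∀ ρ ∈ fwdDom ρmax, HasDerivWithinAt ζ (-(κ ρ) * ζ ρ) (fwdDom ρmax) ρ
  constraint : ∀ ρ ∈ fwdDom ρmax,
      ζ ρ ^ 2 = 1 + 2 * U ρ ^ 2 - (1 - w ρ ^ 2) ^ 2 / r ρ ^ 2 - 2 * κ ρ * N ρ + N ρ ^ 2

/-- A maximal forward solution: a solution on `[0, ρmax)` such that no solution with the
same initial data exists on a strictly larger forward interval. -/
def IsMaximalShootingSol (r₀ w₀ U₀ : ℝ) (ρmax : EReal)
    (r N w U κ ζ : ℝ → ℝ) : Prop :=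
  0 < ρmax ∧ IsShootingSolOn r₀ w₀ U₀ ρmax r N w U κ ζ ∧
    ∀ ρmax' : EReal, ρmax < ρmax' →
      ¬ ∃ r' N' w' U' κ' ζ' : ℝ → ℝ, IsShootingSolOn r₀ w₀ U₀ ρmax' r' N' w' U' κ' ζ'

/-- The set of zeros of `w` in `(0, ρmax)`. -/
def zerosOf (w : ℝ → ℝ) (ρmax : EReal) : Set ℝ :=
  {ρ : ℝ | 0 < ρ ∧ (ρ : EReal) < ρmax ∧ w ρ = 0}

/-- Singular orbit: the solution exists only up to a finite point `ρm`, at which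
`r → 0`, `N → −∞`, while `w, U, κ, ζ` remain bounded. -/
def SingularSol (ρmax : EReal) (r N w U κ ζ : ℝ → ℝ) : Prop :=
  ∃ ρm : ℝ, ρmax = (ρm : EReal) ∧ 0 < ρm ∧
    Tendsto r (𝓝[<] ρm) (𝓝 0) ∧ Tendsto N (𝓝[<] ρm) atBot ∧
    ∃ C : ℝ, ∀ ρ ∈ fwdDom ρmax, |w ρ| ≤ C ∧ |U ρ| ≤ C ∧ |κ ρ| ≤ C ∧ |ζ ρ| ≤ C

/-- Escaping singular orbit: singular, `w` leaves the strip `|w| ≤ 1`, and `w` has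
exactly `n` zeros for `ρ > 0`. -/
def EscapingSol (n : ℕ) (ρmax : EReal) (r N w U κ ζ : ℝ → ℝ) : Prop :=
  SingularSol ρmax r N w U κ ζ ∧ (∃ ρ ∈ fwdDom ρmax, 1 < |w ρ|) ∧
    (zerosOf w ρmax).Finite ∧ (zerosOf w ρmax).ncard = n

/-- Crashing singular orbit: singular with `|w| ≤ 1` on the whole domain. -/
def CrashingSol (ρmax : EReal) (r N w U κ ζ : ℝ → ℝ) : Prop :=
  SingularSol ρmax r N w U κ ζ ∧ ∀ ρ ∈ fwdDom ρmax, |w ρ| ≤ 1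

/-- Oscillatory orbit: global, with `(w, w') = (w, rU) → (0, 0)` as `ρ → ∞`. -/
def OscillatorySol (ρmax : EReal) (r N w U κ ζ : ℝ → ℝ) : Prop :=
  ρmax = ⊤ ∧ Tendsto w atTop (𝓝 0) ∧ Tendsto (fun ρ => r ρ * U ρ) atTop (𝓝 0)

/-- Regular orbit: global, with `(|w|, w') → (1, 0)` as `ρ → ∞`, and `w` has exactly
`n` zeros for `ρ > 0`. -/
def RegularSol (n : ℕ) (ρmax : EReal) (r N w U κ ζ : ℝ → ℝ) : Prop :=
  ρmax = ⊤ ∧ Tendsto (fun ρ => |w ρ|) atTop (𝓝 1) ∧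
    Tendsto (fun ρ => r ρ * U ρ) atTop (𝓝 0) ∧
    (zerosOf w ρmax).Finite ∧ (zerosOf w ρmax).ncard = n

/-- Initial data whose (unique) maximal orbit is escaping singular with `n` zeros of `w`. -/
def InE (n : ℕ) (r₀ w₀ U₀ : ℝ) : Prop :=
  Admissible r₀ w₀ U₀ ∧ ∃ (ρmax : EReal) (r N w U κ ζ : ℝ → ℝ),
    IsMaximalShootingSol r₀ w₀ U₀ ρmax r N w U κ ζ ∧ EscapingSol n ρmax r N w U κ ζ

/-- Initial data whose maximal orbit is crashing singular. -/
def InC (r₀ w₀ U₀ : ℝ) : Prop :=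
  Admissible r₀ w₀ U₀ ∧ ∃ (ρmax : EReal) (r N w U κ ζ : ℝ → ℝ),
    IsMaximalShootingSol r₀ w₀ U₀ ρmax r N w U κ ζ ∧ CrashingSol ρmax r N w U κ ζ

/-- Initial data whose maximal orbit is oscillatory. -/
def InO (r₀ w₀ U₀ : ℝ) : Prop :=
  Admissible r₀ w₀ U₀ ∧ ∃ (ρmax : EReal) (r N w U κ ζ : ℝ → ℝ),
    IsMaximalShootingSol r₀ w₀ U₀ ρmax r N w U κ ζ ∧ OscillatorySol ρmax r N w U κ ζ

/-- Initial data whose maximal orbit is regular with `n` zeros of `w`. -/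
def InR (n : ℕ) (r₀ w₀ U₀ : ℝ) : Prop :=
  Admissible r₀ w₀ U₀ ∧ ∃ (ρmax : EReal) (r N w U κ ζ : ℝ → ℝ),
    IsMaximalShootingSol r₀ w₀ U₀ ρmax r N w U κ ζ ∧ RegularSol n ρmax r N w U κ ζ

section helpers
variable {b : ℝ}

lemma hIcoIoo {t : ℝ} (ht : t ∈ Ioo 0 b) : Ico 0 b ∈ 𝓝 t :=
  mem_nhds_iff.mpr ⟨Ioo 0 b, Ioo_subset_Ico_self, isOpen_Ioo, ht⟩

lemma hda_of_hdw {f F : ℝ → ℝ} (hf : ∀ t ∈ Ico 0 b, HasDerivWithinAt f (F t) (Ico 0 b) t)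
    {t : ℝ} (ht : t ∈ Ioo 0 b) : HasDerivAt f (F t) t :=
  (hf t ⟨ht.1.le, ht.2⟩).hasDerivAt (hIcoIoo ht)

lemma le_init_aux {f : ℝ → ℝ} (hb : 0 < b) (hcont : ContinuousOn f (Ico 0 b))
    (hd : ∀ t ∈ Ioo 0 b, ∃ F, HasDerivAt f F t ∧ F ≤ 0) :
    ∀ t ∈ Ico 0 b, f t ≤ f 0 := by
  intro t ht
  rcases eq_or_lt_of_le ht.1 with h | h
  · rw [← h]
  have hsub : Icc 0 t ⊆ Ico 0 b := fun x hx => ⟨hx.1, lt_of_le_of_lt hx.2 ht.2⟩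
  have hanti : AntitoneOn f (Icc 0 t) := by
    apply antitoneOn_of_deriv_nonpos (convex_Icc 0 t) (hcont.mono hsub)
    · intro x hx
      rw [interior_Icc] at hx
      exact ((hd x ⟨hx.1, hx.2.trans ht.2⟩).choose_spec.1.differentiableAt).differentiableWithinAt
    · intro x hx
      rw [interior_Icc] at hx
      obtain ⟨F, hF, hF0⟩ := hd x ⟨hx.1, hx.2.trans ht.2⟩
      rw [hF.deriv]; exact hF0
  exact hanti (left_mem_Icc.mpr ht.1) (right_mem_Icc.mpr ht.1) ht.1

lemma init_le_aux {f : ℝ → ℝ} (hb : 0 < b) (hcont : ContinuousOn f (Ico 0 b))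
    (hd : ∀ t ∈ Ioo 0 b, ∃ F, HasDerivAt f F t ∧ 0 ≤ F) :
    ∀ t ∈ Ico 0 b, f 0 ≤ f t := by
  intro t ht
  have := le_init_aux (f := fun x => -f x) hb hcont.neg ?_ t ht
  · simp only [neg_le_neg_iff] at this; linarith
  · intro x hx
    obtain ⟨F, hF, hF0⟩ := hd x hx
    exact ⟨-F, hF.neg, by linarith⟩

lemma expD (a t : ℝ) : HasDerivAt (fun s => Real.exp (a * s)) (a * Real.exp (a * t)) t := by
  have h1 : HasDerivAt (fun s : ℝ => a * s) a t := by simpa using (hasDerivAt_id t).const_mul a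
  simpa [mul_comm] using h1.exp

lemma crossing_le {f F : ℝ → ℝ} {M M' : ℝ} (hb : 0 < b) (hMM' : M < M')
    (hcont : ContinuousOn f (Ico 0 b))
    (hd : ∀ t ∈ Ioo 0 b, HasDerivAt f (F t) t)
    (h0 : f 0 ≤ M)
    (hF : ∀ t ∈ Ioo 0 b, M ≤ f t → f t ≤ M' → F t ≤ 0) :
    ∀ t ∈ Ico 0 b, f t ≤ M := by
  by_contra hcon
  push_neg at hcon
  obtain ⟨t₁, ht₁, hgt⟩ := hcon
  have ht₁0 : 0 < t₁ := by
    rcases eq_or_lt_of_le ht₁.1 with h | h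
    · exfalso; rw [← h] at hgt; linarith
    · exact h
  set c := min M' (f t₁) with hc
  have hMc : M < c := lt_min hMM' hgt
  have hsub1 : Icc 0 t₁ ⊆ Ico 0 b := fun x hx => ⟨hx.1, lt_of_le_of_lt hx.2 ht₁.2⟩
  have hcont1 : ContinuousOn f (Icc 0 t₁) := hcont.mono hsub1
  -- T : set of points where f = c
  set T := {t | t ∈ Icc 0 t₁ ∧ f t = c} with hT
  have hTne : T.Nonempty := by
    have hivt := intermediate_value_Icc (le_of_lt ht₁0) hcont1
    have : c ∈ Icc (f 0) (f t₁) := ⟨le_of_lt (lt_of_le_of_lt h0 hMc), min_le_right _ _⟩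
    obtain ⟨x, hx, hfx⟩ := hivt this
    exact ⟨x, hx, hfx⟩
  have hTclosed : IsClosed T := by
    have : T = Icc 0 t₁ ∩ f ⁻¹' {c} := by
      ext x; simp [hT, mem_preimage]
    rw [this]
    exact hcont1.preimage_isClosed_of_isClosed isClosed_Icc isClosed_singleton
  have hTbdd : BddBelow T := ⟨0, fun x hx => hx.1.1⟩
  set t₂ := sInf T with ht₂def
  have ht₂T : t₂ ∈ T := hTclosed.csInf_mem hTne hTbdd
  have hft₂ : f t₂ = c := ht₂T.2
  have ht₂mem : t₂ ∈ Icc 0 t₁ := ht₂T.1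
  have ht₂0 : 0 < t₂ := by
    rcases eq_or_lt_of_le ht₂mem.1 with h | h
    · exfalso; rw [← h] at hft₂; linarith
    · exact h
  have hbelow : ∀ x ∈ Ico 0 t₂, f x < c := by
    intro x hx
    by_contra hge
    push_neg at hge
    have hxt₁ : x ∈ Icc 0 t₁ := ⟨hx.1, le_trans hx.2.le ht₂mem.2⟩
    have hivt := intermediate_value_Icc hx.1 (hcont1.mono (fun y hy => ⟨hy.1, le_trans hy.2 hxt₁.2⟩))
    have : c ∈ Icc (f 0) (f x) := ⟨le_of_lt (lt_of_le_of_lt h0 hMc), hge⟩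
    obtain ⟨y, hy, hfy⟩ := hivt this
    have hyT : y ∈ T := ⟨⟨hy.1, le_trans hy.2 hxt₁.2⟩, hfy⟩
    have := csInf_le hTbdd hyT
    have : t₂ ≤ x := le_trans this hy.2
    linarith [hx.2]
  -- S : last time f ≤ M before t₂
  set S := {t | t ∈ Icc 0 t₂ ∧ f t ≤ M} with hS
  have hSne : S.Nonempty := ⟨0, ⟨le_refl 0, ht₂0.le⟩, h0⟩
  have hsub2 : Icc 0 t₂ ⊆ Ico 0 b := fun x hx =>
    ⟨hx.1, lt_of_le_of_lt (le_trans hx.2 ht₂mem.2) ht₁.2⟩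
  have hScl : IsClosed S := by
    have : S = Icc 0 t₂ ∩ f ⁻¹' (Iic M) := by ext x; simp [hS, mem_preimage]
    rw [this]
    exact (hcont.mono hsub2).preimage_isClosed_of_isClosed isClosed_Icc isClosed_Iic
  have hSbdd : BddAbove S := ⟨t₂, fun x hx => hx.1.2⟩
  set s := sSup S with hsdef
  have hsS : s ∈ S := hScl.csSup_mem hSne hSbdd
  have hfs : f s ≤ M := hsS.2
  have hst₂ : s < t₂ := by
    rcases eq_or_lt_of_le hsS.1.2 with h | h
    · exfalso; rw [h] at hfs; linarith
    · exact h
  have habove : ∀ x ∈ Ioc s t₂, M < f x := by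
    intro x hx
    by_contra hle
    push_neg at hle
    have : x ∈ S := ⟨⟨le_trans hsS.1.1 hx.1.le, hx.2⟩, hle⟩
    have := le_csSup hSbdd this
    linarith [hx.1]
  have hanti : AntitoneOn f (Icc s t₂) := by
    apply antitoneOn_of_deriv_nonpos (convex_Icc s t₂)
      (hcont.mono (fun x hx => hsub2 ⟨le_trans hsS.1.1 hx.1, hx.2⟩))
    · intro x hx
      rw [interior_Icc] at hx
      have hxIoo : x ∈ Ioo 0 b :=
        ⟨lt_of_le_of_lt hsS.1.1 hx.1, lt_of_lt_of_le hx.2 (hsub2 ⟨ht₂0.le, le_refl _⟩).2.le⟩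
      exact (hd x hxIoo).differentiableAt.differentiableWithinAt
    · intro x hx
      rw [interior_Icc] at hx
      have hxIoo : x ∈ Ioo 0 b :=
        ⟨lt_of_le_of_lt hsS.1.1 hx.1, lt_of_lt_of_le hx.2 (hsub2 ⟨ht₂0.le, le_refl _⟩).2.le⟩
      rw [(hd x hxIoo).deriv]
      apply hF x hxIoo (habove x ⟨hx.1, hx.2.le⟩).le
      exact le_trans (hbelow x ⟨hxIoo.1.le, hx.2⟩).le (min_le_left _ _)
  have := hanti (left_mem_Icc.mpr hst₂.le) (right_mem_Icc.mpr hst₂.le) hst₂.le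
  rw [hft₂] at this
  linarith

lemma nhds_Ico_eq (hb : 0 < b) : 𝓝[Ico 0 b] b = 𝓝[Iio b] b := by
  rw [← Ici_inter_Iio]
  exact nhdsWithin_inter_of_mem (mem_nhdsWithin_of_mem_nhds (Ici_mem_nhds hb))

lemma neBot_Ico (hb : 0 < b) : (𝓝[Ico 0 b] b).NeBot := by
  rw [nhds_Ico_eq hb]
  exact nhdsLT_neBot b

lemma exists_tendsto_of_deriv_bdd {f F : ℝ → ℝ} {M : ℝ} (hb : 0 < b)
    (hf : ∀ t ∈ Ico 0 b, HasDerivWithinAt f (F t) (Ico 0 b) t)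
    (hM : ∀ t ∈ Ico 0 b, |F t| ≤ M) :
    ∃ l, Tendsto f (𝓝[Ico 0 b] b) (𝓝 l) ∧ ∀ t ∈ Ico 0 b, |f t - l| ≤ M * (b - t) := by
  have hM0 : 0 ≤ M := le_trans (abs_nonneg _) (hM 0 ⟨le_refl _, hb⟩)
  have hdist : ∀ x ∈ Ico 0 b, ∀ y ∈ Ico 0 b, ‖f y - f x‖ ≤ M * ‖y - x‖ := by
    intro x hx y hy
    exact (convex_Ico 0 b).norm_image_sub_le_of_norm_hasDerivWithin_le hf
      (fun z hz => by rw [Real.norm_eq_abs]; exact hM z hz) hx hy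
  have hlip : LipschitzOnWith (Real.toNNReal M) f (Ico 0 b) := by
    apply LipschitzOnWith.of_dist_le_mul
    intro x hx y hy
    rw [dist_eq_norm, dist_eq_norm]
    simpa [Real.coe_toNNReal M hM0] using hdist y hy x hx
  obtain ⟨g, hg, hfg⟩ := hlip.extend_real
  refine ⟨g b, ?_, ?_⟩
  · have h1 : Tendsto g (𝓝[Ico 0 b] b) (𝓝 (g b)) :=
      tendsto_nhdsWithin_of_tendsto_nhds (hg.continuous.tendsto b)
    apply h1.congr'
    exact eventually_mem_nhdsWithin.mono (fun x hx => (hfg hx).symm)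
  · intro t ht
    have key : ∀ y ∈ Ico 0 b, |f t - f y| ≤ M * (b - t) → True := fun _ _ _ => trivial
    -- |f t - g b| ≤ limit of |f t - f y| ≤ M * (b - t) -- use closedness
    have htend : Tendsto (fun y => |f t - f y|) (𝓝[Ico 0 b] b) (𝓝 |f t - g b|) := by
      have h1 : Tendsto f (𝓝[Ico 0 b] b) (𝓝 (g b)) := by
        have : Tendsto g (𝓝[Ico 0 b] b) (𝓝 (g b)) :=
          tendsto_nhdsWithin_of_tendsto_nhds (hg.continuous.tendsto b)
        apply this.congr'
        exact eventually_mem_nhdsWithin.mono (fun x hx => (hfg hx).symm)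
      exact ((tendsto_const_nhds.sub h1).abs)
    haveI := neBot_Ico hb
    apply le_of_tendsto htend
    filter_upwards [eventually_mem_nhdsWithin, eventually_nhdsWithin_of_eventually_nhds
      (eventually_ge_nhds (show t < b from ht.2))] with y hy hty
    calc |f t - f y| ≤ M * ‖y - t‖ := by
            rw [abs_sub_comm]; exact hdist t ht y hy
      _ ≤ M * (b - t) := by
            rw [Real.norm_eq_abs, abs_of_nonneg (by linarith)]
            exact mul_le_mul_of_nonneg_left (by linarith [hy.2]) hM0
end helpers


set_option maxHeartbeats 2000000 in
lemma shooting_bounds {r₀ w₀ U₀ : ℝ} (hadm : Admissible r₀ w₀ U₀)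
    {ρmax : EReal} {r N w U κ ζ : ℝ → ℝ}
    (hs : IsShootingSolOn r₀ w₀ U₀ ρmax r N w U κ ζ)
    {ρb C : ℝ} (hρb : 0 < ρb) (hdom : (ρb : EReal) ≤ ρmax) (hC : 0 ≤ C)
    (hN : ∀ ρ ∈ Ico (0:ℝ) ρb, |N ρ| ≤ C) :
    ∃ R εr Kκ Kζ Kw KU KQ : ℝ, 0 < εr ∧ 0 ≤ Kζ ∧ 0 ≤ Kw ∧ 0 ≤ KU ∧ 0 ≤ KQ ∧ 0 ≤ R ∧ 0 ≤ Kκ ∧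
      ∀ t ∈ Ico (0:ℝ) ρb, εr ≤ r t ∧ r t ≤ R ∧ 0 ≤ κ t ∧ κ t ≤ Kκ ∧ |ζ t| ≤ Kζ ∧
        |w t| ≤ Kw ∧ |U t| ≤ KU ∧ (1 - w t ^ 2) ^ 2 / r t ^ 2 ≤ KQ := by
  obtain ⟨hr₀, hw₀, hE₀0⟩ := hadm
  obtain ⟨E₀, hE₀def⟩ : ∃ x : ℝ, x = initialEnergy r₀ w₀ U₀ := ⟨_, rfl⟩
  have hE₀ : 0 ≤ E₀ := hE₀def ▸ hE₀0
  have hinitζ : ζ 0 = Real.sqrt E₀ := by rw [hs.init_ζ, hE₀def]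
  set I : Set ℝ := Ico (0:ℝ) ρb with hIdef
  have hID : I ⊆ fwdDom ρmax := by
    intro t ht
    exact ⟨ht.1, lt_of_lt_of_le (by exact_mod_cast ht.2) hdom⟩
  -- derivatives within I
  have hr' : ∀ t ∈ I, HasDerivWithinAt r (r t * N t) I t :=
    fun t ht => (hs.ode_r t (hID ht)).mono hID
  have hN' : ∀ t ∈ I, HasDerivWithinAt N (1 - (1 - w t ^ 2) ^ 2 / r t ^ 2 - κ t * N t) I t :=
    fun t ht => (hs.ode_N t (hID ht)).mono hID
  have hw' : ∀ t ∈ I, HasDerivWithinAt w (r t * U t) I t :=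
    fun t ht => (hs.ode_w t (hID ht)).mono hID
  have hU' : ∀ t ∈ I, HasDerivWithinAt U (-(κ t - N t) * U t - w t * (1 - w t ^ 2) / r t) I t :=
    fun t ht => (hs.ode_U t (hID ht)).mono hID
  have hκ' : ∀ t ∈ I, HasDerivWithinAt κ (1 + 2 * U t ^ 2 - κ t ^ 2) I t :=
    fun t ht => (hs.ode_κ t (hID ht)).mono hID
  have hζ' : ∀ t ∈ I, HasDerivWithinAt ζ (-(κ t) * ζ t) I t :=
    fun t ht => (hs.ode_ζ t (hID ht)).mono hID
  have hcr : ContinuousOn r I := fun t ht => (hr' t ht).continuousWithinAt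
  have hcN : ContinuousOn N I := fun t ht => (hN' t ht).continuousWithinAt
  have hcw : ContinuousOn w I := fun t ht => (hw' t ht).continuousWithinAt
  have hcU : ContinuousOn U I := fun t ht => (hU' t ht).continuousWithinAt
  have hcκ : ContinuousOn κ I := fun t ht => (hκ' t ht).continuousWithinAt
  have hcζ : ContinuousOn ζ I := fun t ht => (hζ' t ht).continuousWithinAt
  have hrpos : ∀ t ∈ I, 0 < r t := fun t ht => hs.r_pos t (hID ht)
  have hcon : ∀ t ∈ I, ζ t ^ 2 =
      1 + 2 * U t ^ 2 - (1 - w t ^ 2) ^ 2 / r t ^ 2 - 2 * κ t * N t + N t ^ 2 :=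
    fun t ht => hs.constraint t (hID ht)
  have hQnn : ∀ t ∈ I, 0 ≤ (1 - w t ^ 2) ^ 2 / r t ^ 2 :=
    fun t _ => div_nonneg (sq_nonneg _) (sq_nonneg _)
  have hNb : ∀ t ∈ I, -C ≤ N t ∧ N t ≤ C := fun t ht => abs_le.mp (hN t ht)
  have hIoo : ∀ {t : ℝ}, t ∈ Ioo 0 ρb → t ∈ I := fun ht => ⟨ht.1.le, ht.2⟩
  -- (1) upper bound for r
  obtain ⟨R, hRdef⟩ : ∃ x : ℝ, x = r₀ * Real.exp (C * ρb) := ⟨_, rfl⟩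
  have hR0 : 0 < R := hRdef ▸ mul_pos hr₀ (Real.exp_pos _)
  have hrub : ∀ t ∈ I, r t ≤ R := by
    have key := le_init_aux (f := fun t => r t * Real.exp (-C * t)) hρb
      (hcr.mul ((Real.continuous_exp.comp (continuous_const.mul continuous_id)).continuousOn))
      (by
        intro t ht
        refine ⟨r t * N t * Real.exp (-C * t) + r t * (-C * Real.exp (-C * t)),
          (hda_of_hdw hr' ht).mul (expD (-C) t), ?_⟩
        have h1 := hrpos t (hIoo ht)
        have h2 := (hNb t (hIoo ht)).2
        have h3 := Real.exp_pos (-C * t)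
        have key : r t * Real.exp (-C * t) * (N t - C) ≤ 0 :=
          mul_nonpos_of_nonneg_of_nonpos (mul_pos h1 h3).le (by linarith)
        nlinarith [key])
    intro t ht
    have h := key t ht
    simp only [hs.init_r, mul_zero, neg_zero, Real.exp_zero, mul_one] at h
    have e1 : Real.exp (-C * t) * Real.exp (C * t) = 1 := by
      rw [← Real.exp_add]; ring_nf; exact Real.exp_zero
    have e2 : Real.exp (C * t) ≤ Real.exp (C * ρb) :=
      Real.exp_le_exp.mpr (mul_le_mul_of_nonneg_left ht.2.le hC)
    have h3 := Real.exp_pos (C * t)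
    have hrt : r t = (r t * Real.exp (-C * t)) * Real.exp (C * t) := by
      rw [mul_assoc, e1, mul_one]
    rw [hrt, hRdef]
    calc (r t * Real.exp (-C * t)) * Real.exp (C * t) ≤ r₀ * Real.exp (C * t) :=
          mul_le_mul_of_nonneg_right h h3.le
      _ ≤ r₀ * Real.exp (C * ρb) := mul_le_mul_of_nonneg_left e2 hr₀.le
  -- (2) lower bound for r
  obtain ⟨εr, hεrdef⟩ : ∃ x : ℝ, x = r₀ * Real.exp (-(C * ρb)) := ⟨_, rfl⟩
  have hεr0 : 0 < εr := hεrdef ▸ mul_pos hr₀ (Real.exp_pos _)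
  have hrlb : ∀ t ∈ I, εr ≤ r t := by
    have key := init_le_aux (f := fun t => r t * Real.exp (C * t)) hρb
      (hcr.mul ((Real.continuous_exp.comp (continuous_const.mul continuous_id)).continuousOn))
      (by
        intro t ht
        refine ⟨r t * N t * Real.exp (C * t) + r t * (C * Real.exp (C * t)),
          (hda_of_hdw hr' ht).mul (expD C t), ?_⟩
        have h1 := hrpos t (hIoo ht)
        have h2 := (hNb t (hIoo ht)).1
        have h3 := Real.exp_pos (C * t)
        have key : 0 ≤ r t * Real.exp (C * t) * (N t + C) :=
          mul_nonneg (mul_pos h1 h3).le (by linarith)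
        nlinarith [key])
    intro t ht
    have h := key t ht
    simp only [hs.init_r, mul_zero, Real.exp_zero, mul_one] at h
    have e1 : Real.exp (C * t) * Real.exp (-(C * t)) = 1 := by
      rw [← Real.exp_add]; ring_nf; exact Real.exp_zero
    have e2 : Real.exp (-(C * ρb)) ≤ Real.exp (-(C * t)) :=
      Real.exp_le_exp.mpr (neg_le_neg (mul_le_mul_of_nonneg_left ht.2.le hC))
    have h4 := Real.exp_pos (-(C * t))
    have hrt : r t = (r t * Real.exp (C * t)) * Real.exp (-(C * t)) := by
      rw [mul_assoc, e1, mul_one]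
    rw [hεrdef, hrt]
    calc r₀ * Real.exp (-(C * ρb)) ≤ r₀ * Real.exp (-(C * t)) :=
          mul_le_mul_of_nonneg_left e2 hr₀.le
      _ ≤ (r t * Real.exp (C * t)) * Real.exp (-(C * t)) :=
          mul_le_mul_of_nonneg_right h h4.le
  -- (3) κ ≥ 0
  have hκnn : ∀ t ∈ I, 0 ≤ κ t := by
    have key := crossing_le (f := fun t => -κ t) (F := fun t => -(1 + 2 * U t ^ 2 - κ t ^ 2))
      (M := 0) (M' := 1/2) hρb (by norm_num) hcκ.neg
      (fun t ht => (hda_of_hdw hκ' ht).neg)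
      (by simp [hs.init_κ])
      (by
        intro t ht h1 h2
        simp only [neg_le, le_neg] at h1 h2 ⊢
        nlinarith [sq_nonneg (U t)])
    intro t ht
    have := key t ht
    simpa using this
  -- (4) ζ bound
  obtain ⟨Kζ, hKζdef⟩ : ∃ x : ℝ, x = Real.sqrt E₀ := ⟨_, rfl⟩
  have hζsq : ∀ t ∈ I, ζ t ^ 2 ≤ E₀ := by
    have key := le_init_aux (f := fun t => ζ t ^ 2) hρb (hcζ.pow 2)
      (by
        intro t ht
        refine ⟨2 * ζ t ^ 1 * (-(κ t) * ζ t), (hda_of_hdw hζ' ht).pow 2, ?_⟩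
        have h1 := hκnn t (hIoo ht)
        nlinarith [sq_nonneg (ζ t)])
    intro t ht
    have h : ζ t ^ 2 ≤ ζ 0 ^ 2 := key t ht
    rw [hinitζ] at h
    rwa [Real.sq_sqrt hE₀] at h
  have hζb : ∀ t ∈ I, |ζ t| ≤ Kζ := by
    intro t ht
    rw [hKζdef, ← Real.sqrt_sq_eq_abs]
    exact Real.sqrt_le_sqrt (hζsq t ht)
  -- (5) κ + N ≤ M5
  obtain ⟨M5, hM5def⟩ : ∃ x : ℝ, x = 2 * Real.sqrt (1 + E₀) + 1 := ⟨_, rfl⟩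
  have hsq15 : Real.sqrt (1 + E₀) ^ 2 = 1 + E₀ := Real.sq_sqrt (by linarith)
  have hsq15' : 0 ≤ Real.sqrt (1 + E₀) := Real.sqrt_nonneg _
  have hM5pos : 0 < M5 := by rw [hM5def]; linarith
  have huub : ∀ t ∈ I, κ t + N t ≤ M5 := by
    apply crossing_le (F := fun t => (1 + 2 * U t ^ 2 - κ t ^ 2) +
        (1 - (1 - w t ^ 2) ^ 2 / r t ^ 2 - κ t * N t)) hρb (lt_add_one M5)
      (hcκ.add hcN)
      (fun t ht => (hda_of_hdw hκ' ht).add (hda_of_hdw hN' ht))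
      (by simp [hs.init_κ, hs.init_N]; linarith)
    intro t ht h1 h2
    have hc := hcon t (hIoo ht)
    have hζ2 := hζsq t (hIoo ht)
    simp only [Pi.add_apply] at h1 h2
    nlinarith [sq_nonneg (κ t - N t), sq_nonneg (κ t + N t - M5)]
  obtain ⟨Kκ, hKκdef⟩ : ∃ x : ℝ, x = M5 + C := ⟨_, rfl⟩
  have hκub : ∀ t ∈ I, κ t ≤ Kκ := by
    intro t ht
    have := huub t ht
    have := (hNb t ht).1
    rw [hKκdef]; linarith
  -- (7) w bounds
  have hKκ0 : 0 ≤ Kκ := by rw [hKκdef]; linarith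
  obtain ⟨B, hBdef⟩ : ∃ x : ℝ, x = E₀ + 2 * Kκ * C + 1 := ⟨_, rfl⟩
  have hB0 : 0 ≤ B := by
    have h1 : 0 ≤ 2 * Kκ * C := mul_nonneg (by linarith) hC
    rw [hBdef]; linarith
  have hUsqQ : ∀ t ∈ I, 2 * U t ^ 2 ≤ (1 - w t ^ 2) ^ 2 / r t ^ 2 + B := by
    intro t ht
    have hc := hcon t ht
    have hζ2 := hζsq t ht
    have h1 := hκnn t ht
    have h2 := hκub t ht
    have h3 := hNb t ht
    have h4 : 2 * κ t * N t ≤ 2 * Kκ * C := by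
      nlinarith [mul_le_mul_of_nonneg_left h3.2 h1, mul_le_mul_of_nonneg_right h2 hC]
    rw [hBdef]
    linarith [sq_nonneg (N t)]
  obtain ⟨c₂, hc₂def⟩ : ∃ x : ℝ, x = R / 2 + R / 4 + R * B / 4 + R / 4 * (Kκ * C) := ⟨_, rfl⟩
  have hc₂0 : 0 ≤ c₂ := by
    have h1 : 0 ≤ R * B / 4 := by
      have := mul_nonneg hR0.le hB0; linarith
    have h2 : 0 ≤ R / 4 * (Kκ * C) := mul_nonneg (by linarith [hR0.le]) (mul_nonneg hKκ0 hC)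
    rw [hc₂def]; linarith [hR0.le]
  have hwub : ∀ t ∈ I, w t ≤ 1 + R / 4 * C + c₂ * ρb := by
    have key := le_init_aux (f := fun t => w t + R / 4 * N t - c₂ * t) hρb
      ((hcw.add (continuousOn_const.mul hcN : ContinuousOn (fun t => R / 4 * N t) I)).sub
        ((continuous_const.mul continuous_id).continuousOn))
      (by
        intro t ht
        refine ⟨r t * U t + R / 4 * (1 - (1 - w t ^ 2) ^ 2 / r t ^ 2 - κ t * N t) - c₂ * 1,
          ((hda_of_hdw hw' ht).add ((hda_of_hdw hN' ht).const_mul (R/4))).sub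
            ((hasDerivAt_id t).const_mul c₂), ?_⟩
        have h1 := hrpos t (hIoo ht)
        have h2 := hrub t (hIoo ht)
        have h3 := hUsqQ t (hIoo ht)
        have h4 := hκnn t (hIoo ht)
        have h5 := hκub t (hIoo ht)
        have h6 := hNb t (hIoo ht)
        have hrU : r t * U t ≤ r t / 2 + R / 2 * U t ^ 2 := by
          nlinarith [mul_nonneg h1.le (sq_nonneg (U t - 1)),
            mul_le_mul_of_nonneg_right h2 (sq_nonneg (U t))]
        have hrU2 : r t * U t ≤ R / 2 + R / 4 * ((1 - w t ^ 2) ^ 2 / r t ^ 2 + B) := by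
          nlinarith [mul_le_mul_of_nonneg_left h3 (by linarith [hR0.le] : (0:ℝ) ≤ R / 4)]
        have hκN : -(R / 4 * (κ t * N t)) ≤ R / 4 * (Kκ * C) := by
          have hx : -(κ t * N t) ≤ Kκ * C := by nlinarith
          nlinarith [mul_le_mul_of_nonneg_left hx (by linarith [hR0.le] : (0:ℝ) ≤ R / 4)]
        rw [hc₂def]
        nlinarith [hrU2, hκN])
    intro t ht
    have h := key t ht
    simp only [hs.init_w, hs.init_N, mul_zero, add_zero, sub_zero] at h
    have h6 := (hNb t ht).1
    have hw1 : w₀ ≤ 1 := (abs_le.mp hw₀).2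
    have hct : c₂ * t ≤ c₂ * ρb := mul_le_mul_of_nonneg_left ht.2.le hc₂0
    have h7 : R / 4 * (-(N t)) ≤ R / 4 * C :=
      mul_le_mul_of_nonneg_left (by linarith) (by linarith [hR0.le])
    linarith
  have hwlb : ∀ t ∈ I, -(1 + R / 4 * C + c₂ * ρb) ≤ w t := by
    have key := init_le_aux (f := fun t => w t - R / 4 * N t + c₂ * t) hρb
      ((hcw.sub (continuousOn_const.mul hcN : ContinuousOn (fun t => R / 4 * N t) I)).add
        ((continuous_const.mul continuous_id).continuousOn))
      (by
        intro t ht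
        refine ⟨r t * U t - R / 4 * (1 - (1 - w t ^ 2) ^ 2 / r t ^ 2 - κ t * N t) + c₂ * 1,
          ((hda_of_hdw hw' ht).sub ((hda_of_hdw hN' ht).const_mul (R/4))).add
            ((hasDerivAt_id t).const_mul c₂), ?_⟩
        have h1 := hrpos t (hIoo ht)
        have h2 := hrub t (hIoo ht)
        have h3 := hUsqQ t (hIoo ht)
        have h4 := hκnn t (hIoo ht)
        have h5 := hκub t (hIoo ht)
        have h6 := hNb t (hIoo ht)
        have hrU : -(r t / 2 + R / 2 * U t ^ 2) ≤ r t * U t := by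
          nlinarith [mul_nonneg h1.le (sq_nonneg (U t + 1)),
            mul_le_mul_of_nonneg_right h2 (sq_nonneg (U t))]
        have hrU2 : -(R / 2 + R / 4 * ((1 - w t ^ 2) ^ 2 / r t ^ 2 + B)) ≤ r t * U t := by
          nlinarith [mul_le_mul_of_nonneg_left h3 (by linarith [hR0.le] : (0:ℝ) ≤ R / 4)]
        have hκN : -(R / 4 * (Kκ * C)) ≤ R / 4 * (κ t * N t) := by
          have hx : -(Kκ * C) ≤ κ t * N t := by nlinarith
          nlinarith [mul_le_mul_of_nonneg_left hx (by linarith [hR0.le] : (0:ℝ) ≤ R / 4)]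
        rw [hc₂def]
        nlinarith [hrU2, hκN])
    intro t ht
    have h := key t ht
    simp only [hs.init_w, hs.init_N, mul_zero, add_zero, sub_zero] at h
    have h6 := (hNb t ht).1
    have hw1 : -1 ≤ w₀ := (abs_le.mp hw₀).1
    have hct : c₂ * t ≤ c₂ * ρb := mul_le_mul_of_nonneg_left ht.2.le hc₂0
    have h7 : R / 4 * (-C) ≤ R / 4 * N t :=
      mul_le_mul_of_nonneg_left (by linarith) (by linarith [hR0.le])
    linarith
  obtain ⟨Kw, hKwdef⟩ : ∃ x : ℝ, x = 1 + R / 4 * C + c₂ * ρb := ⟨_, rfl⟩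
  have hKw0 : 0 ≤ Kw := by
    have h1 : 0 ≤ R / 4 * C := mul_nonneg (by linarith [hR0.le]) hC
    have h2 : 0 ≤ c₂ * ρb := mul_nonneg hc₂0 hρb.le
    rw [hKwdef]; linarith
  have hwb : ∀ t ∈ I, |w t| ≤ Kw := by
    intro t ht
    rw [abs_le, hKwdef]
    exact ⟨hwlb t ht, hwub t ht⟩
  -- (8) Q bound
  obtain ⟨KQ, hKQdef⟩ : ∃ x : ℝ, x = (1 + Kw ^ 2) ^ 2 / εr ^ 2 := ⟨_, rfl⟩
  have hKQ0 : 0 ≤ KQ := by rw [hKQdef]; positivity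
  have hQb : ∀ t ∈ I, (1 - w t ^ 2) ^ 2 / r t ^ 2 ≤ KQ := by
    intro t ht
    have h1 := hrlb t ht
    have h2 := hrpos t ht
    have h3 := hwb t ht
    rw [hKQdef]
    apply div_le_div₀ (by positivity)
    · have hw2 : w t ^ 2 ≤ Kw ^ 2 := sq_le_sq' (by linarith [(abs_le.mp h3).1]) (abs_le.mp h3).2
      nlinarith [sq_nonneg (w t)]
    · exact pow_pos hεr0 2
    · nlinarith
  -- (9) U bound
  obtain ⟨KU, hKUdef⟩ : ∃ x : ℝ, x = Real.sqrt ((KQ + B) / 2) := ⟨_, rfl⟩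
  have hUb : ∀ t ∈ I, |U t| ≤ KU := by
    intro t ht
    have h1 := hUsqQ t ht
    have h2 := hQb t ht
    rw [hKUdef, ← Real.sqrt_sq_eq_abs]
    apply Real.sqrt_le_sqrt
    linarith
  exact ⟨R, εr, Kκ, Kζ, Kw, KU, KQ, hεr0, hKζdef ▸ Real.sqrt_nonneg _, hKw0,
    hKUdef ▸ Real.sqrt_nonneg _, hKQ0, hR0.le, hKκ0,
    fun t ht => ⟨hrlb t ht, hrub t ht, hκnn t ht, hκub t ht, hζb t ht, hwb t ht, hUb t ht,
      hQb t ht⟩⟩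


abbrev E6 : Type := ℝ × ℝ × ℝ × ℝ × ℝ × ℝ

def vf : E6 → E6 := fun p =>
  (p.1 * p.2.1,
   1 - (1 - p.2.2.1 ^ 2) ^ 2 / p.1 ^ 2 - p.2.2.2.2.1 * p.2.1,
   p.1 * p.2.2.2.1,
   -(p.2.2.2.2.1 - p.2.1) * p.2.2.2.1 - p.2.2.1 * (1 - p.2.2.1 ^ 2) / p.1,
   1 + 2 * p.2.2.2.1 ^ 2 - p.2.2.2.2.1 ^ 2,
   -(p.2.2.2.2.1) * p.2.2.2.2.2)

def P1 : E6 → ℝ := fun p => p.1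
def P2 : E6 → ℝ := fun p => p.2.1
def P3 : E6 → ℝ := fun p => p.2.2.1
def P4 : E6 → ℝ := fun p => p.2.2.2.1
def P5 : E6 → ℝ := fun p => p.2.2.2.2.1
def P6 : E6 → ℝ := fun p => p.2.2.2.2.2

lemma vfP1 (p : E6) : P1 (vf p) = P1 p * P2 p := rfl
lemma vfP2 (p : E6) : P2 (vf p) = 1 - (1 - P3 p ^ 2) ^ 2 / P1 p ^ 2 - P5 p * P2 p := rfl
lemma vfP3 (p : E6) : P3 (vf p) = P1 p * P4 p := rfl
lemma vfP4 (p : E6) : P4 (vf p) = -(P5 p - P2 p) * P4 p - P3 p * (1 - P3 p ^ 2) / P1 p := rfl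
lemma vfP5 (p : E6) : P5 (vf p) = 1 + 2 * P4 p ^ 2 - P5 p ^ 2 := rfl
lemma vfP6 (p : E6) : P6 (vf p) = -(P5 p) * P6 p := rfl

section proj
variable {F G : Type*} [NormedAddCommGroup F] [NormedSpace ℝ F]
  [NormedAddCommGroup G] [NormedSpace ℝ G]

lemma HasDerivAt.fst' {f : ℝ → F × G} {v : F × G} {t : ℝ} (h : HasDerivAt f v t) :
    HasDerivAt (fun s => (f s).1) v.1 t := by
  have := (hasFDerivAt_fst (p := f t)).comp_hasDerivAt t h
  simpa [Function.comp_def] using this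

lemma HasDerivAt.snd' {f : ℝ → F × G} {v : F × G} {t : ℝ} (h : HasDerivAt f v t) :
    HasDerivAt (fun s => (f s).2) v.2 t := by
  have := (hasFDerivAt_snd (p := f t)).comp_hasDerivAt t h
  simpa [Function.comp_def] using this
end proj

lemma vf_contDiffAt {p : E6} (hp : p.1 ≠ 0) : ContDiffAt ℝ 1 vf p := by
  have h1 : ContDiffAt ℝ 1 (fun q : E6 => q.1) p := contDiffAt_fst
  have h2 : ContDiffAt ℝ 1 (fun q : E6 => q.2.1) p := contDiffAt_fst.comp p contDiffAt_snd
  have h3 : ContDiffAt ℝ 1 (fun q : E6 => q.2.2.1) p :=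
    contDiffAt_fst.comp p (contDiffAt_snd.comp p contDiffAt_snd)
  have h4 : ContDiffAt ℝ 1 (fun q : E6 => q.2.2.2.1) p :=
    contDiffAt_fst.comp p (contDiffAt_snd.comp p (contDiffAt_snd.comp p contDiffAt_snd))
  have h5 : ContDiffAt ℝ 1 (fun q : E6 => q.2.2.2.2.1) p :=
    contDiffAt_fst.comp p (contDiffAt_snd.comp p (contDiffAt_snd.comp p
      (contDiffAt_snd.comp p contDiffAt_snd)))
  have h6 : ContDiffAt ℝ 1 (fun q : E6 => q.2.2.2.2.2) p :=
    contDiffAt_snd.comp p (contDiffAt_snd.comp p (contDiffAt_snd.comp p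
      (contDiffAt_snd.comp p contDiffAt_snd)))
  have hsq : (fun q : E6 => q.1 ^ 2) p ≠ 0 := pow_ne_zero 2 hp
  exact (h1.mul h2).prodMk <|
    (((contDiffAt_const (c := (1:ℝ))).sub
      (((contDiffAt_const (c := (1:ℝ))).sub (h3.pow 2)).pow 2 |>.div (h1.pow 2) hsq)).sub
      (h5.mul h2)).prodMk <|
    (h1.mul h4).prodMk <|
    ((((h5.sub h2).neg).mul h4).sub
      ((h3.mul ((contDiffAt_const (c := (1:ℝ))).sub (h3.pow 2))).div h1 hp)).prodMk <|
    (((contDiffAt_const (c := (1:ℝ))).add ((contDiffAt_const (c := (2:ℝ))).mul (h4.pow 2))).sub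
      (h5.pow 2)).prodMk <|
    ((h5.neg).mul h6)

/-- Gluing an extension across `ρb`. -/
lemma glue_deriv {ρb δ ε : ℝ} (hρb : 0 < ρb) (hδ : 0 < δ) (hε : 0 < ε) (hδε : δ ≤ ε / 2)
    {orig : ℝ → ℝ} {floc : ℝ → E6} {proj : E6 → ℝ} {W : ℝ → E6} {G : ℝ → ℝ}
    (hproj : ∀ (g : ℝ → E6) (v : E6) (t : ℝ), HasDerivAt g v t →
      HasDerivAt (fun s => proj (g s)) (proj v) t)
    (horig : ∀ t ∈ Ico 0 ρb, HasDerivWithinAt orig (G t) (Ico 0 ρb) t)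
    (hGlim : Tendsto G (𝓝[Iio ρb] ρb) (𝓝 (proj (W ρb))))
    (holim : Tendsto orig (𝓝[Iio ρb] ρb) (𝓝 (proj (floc ρb))))
    (hfloc : ∀ t ∈ Ioo (ρb - ε) (ρb + ε), HasDerivAt floc (W t) t) :
    ∀ t ∈ Ico 0 (ρb + δ),
      HasDerivWithinAt (fun s => if s < ρb then orig s else proj (floc s))
        (if t < ρb then G t else proj (W t)) (Ico 0 (ρb + δ)) t := by
  set fE : ℝ → ℝ := fun s => if s < ρb then orig s else proj (floc s) with hfE
  intro t ht
  have hmemIoo : ∀ {x : ℝ}, ρb ≤ x → x < ρb + δ → x ∈ Ioo (ρb - ε) (ρb + ε) :=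
    fun {x} h1 h2 => ⟨by linarith, by linarith⟩
  rcases lt_trichotomy t ρb with hlt | heq | hgt
  · rw [if_pos hlt]
    have hO : HasDerivWithinAt orig (G t) (Ico 0 (ρb + δ)) t := by
      apply (horig t ⟨ht.1, hlt⟩).mono_of_mem_nhdsWithin
      apply mem_nhdsWithin.mpr ⟨Iio ρb, isOpen_Iio, hlt, ?_⟩
      rintro x ⟨hx1, hx2⟩
      exact ⟨hx2.1, hx1⟩
    apply hO.congr_of_eventuallyEq
    · filter_upwards [mem_nhdsWithin_of_mem_nhds (Iio_mem_nhds hlt)] with x hx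
      show fE x = orig x
      simp only [hfE]; exact if_pos hx
    · show fE t = orig t
      simp only [hfE]; exact if_pos hlt
  · rw [heq, if_neg (lt_irrefl _)]
    have hEder : ∀ x ∈ Ioo (ρb / 2) ρb, HasDerivAt fE (G x) x := by
      intro x hx
      have hxI : x ∈ Ioo 0 ρb := ⟨lt_trans (by linarith : (0:ℝ) < ρb / 2) hx.1, hx.2⟩
      have hO : HasDerivAt orig (G x) x :=
        (horig x ⟨hxI.1.le, hxI.2⟩).hasDerivAt
          (mem_nhds_iff.mpr ⟨Ioo 0 ρb, Ioo_subset_Ico_self, isOpen_Ioo, hxI⟩)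
      apply hO.congr_of_eventuallyEq
      filter_upwards [Iio_mem_nhds hx.2] with y hy
      simp only [hfE]; exact if_pos hy
    have hleft : HasDerivWithinAt fE (proj (W ρb)) (Iic ρb) ρb := by
      apply hasDerivWithinAt_Iic_of_tendsto_deriv (s := Ioo (ρb / 2) ρb)
      · exact fun x hx => (hEder x hx).differentiableAt.differentiableWithinAt
      · have hval : fE ρb = proj (floc ρb) := by
          simp only [hfE]; exact if_neg (lt_irrefl _)
        unfold ContinuousWithinAt
        rw [hval]
        apply Tendsto.congr' _ (holim.mono_left (nhdsWithin_mono _ Ioo_subset_Iio_self))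
        filter_upwards [eventually_mem_nhdsWithin] with x hx
        show orig x = fE x
        simp only [hfE]; exact (if_pos hx.2).symm
      · exact Ioo_mem_nhdsLT_of_mem ⟨by linarith, le_refl _⟩
      · apply Tendsto.congr' _ hGlim
        filter_upwards [Ioo_mem_nhdsLT_of_mem
          (show ρb ∈ Ioc (ρb / 2) ρb from ⟨by linarith, le_refl _⟩)] with x hx
        exact ((hEder x hx).deriv).symm
    have hright : HasDerivWithinAt fE (proj (W ρb)) (Ici ρb) ρb := by
      have hF : HasDerivAt (fun s => proj (floc s)) (proj (W ρb)) ρb :=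
        hproj floc (W ρb) ρb (hfloc ρb (hmemIoo (le_refl _) (by linarith)))
      apply hF.hasDerivWithinAt.congr
      · intro x hx
        simp only [hfE]; exact if_neg (not_lt.mpr hx)
      · simp only [hfE]; exact if_neg (lt_irrefl _)
    exact (hleft.union hright).mono (fun x _ => (le_total x ρb).elim Or.inl Or.inr)
  · rw [if_neg (not_lt.mpr hgt.le)]
    have hF : HasDerivAt (fun s => proj (floc s)) (proj (W t)) t :=
      hproj floc (W t) t (hfloc t (hmemIoo hgt.le ht.2))
    have : HasDerivAt fE (proj (W t)) t := by
      apply hF.congr_of_eventuallyEq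
      filter_upwards [Ioi_mem_nhds hgt] with y hy
      simp only [hfE]; exact if_neg (not_lt.mpr (le_of_lt hy))
    exact this.hasDerivWithinAt


set_option maxHeartbeats 3000000 in
/-- If `N` remains bounded on `[0, ρ̄)` with `ρ̄ ≤ ρmax` finite, then all dependent
variables remain bounded there, `r` stays away from `0`, and the solution continues
beyond `ρ̄` (i.e. `ρ̄ < ρmax`). -/
theorem continuation_when_N_bounded (r₀ w₀ U₀ : ℝ) (hadm : Admissible r₀ w₀ U₀)
    (ρmax : EReal) (r N w U κ ζ : ℝ → ℝ)
    (hsol : IsMaximalShootingSol r₀ w₀ U₀ ρmax r N w U κ ζ)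
    (ρb : ℝ) (hρb : 0 < ρb) (hdom : (ρb : EReal) ≤ ρmax)
    (hN : ∃ C : ℝ, ∀ ρ ∈ Set.Ico (0:ℝ) ρb, |N ρ| ≤ C) :
    (∃ C : ℝ, ∀ ρ ∈ Set.Ico (0:ℝ) ρb,
      |r ρ| ≤ C ∧ |N ρ| ≤ C ∧ |w ρ| ≤ C ∧ |U ρ| ≤ C ∧ |κ ρ| ≤ C ∧ |ζ ρ| ≤ C) ∧
    (∃ ε : ℝ, 0 < ε ∧ ∀ ρ ∈ Set.Ico (0:ℝ) ρb, ε ≤ r ρ) ∧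
    (ρb : EReal) < ρmax := by
  obtain ⟨hpos, hss, hmax⟩ := hsol
  obtain ⟨C0, hC0⟩ := hN
  obtain ⟨C, hCdef⟩ : ∃ x : ℝ, x = max C0 0 := ⟨_, rfl⟩
  have hC : (0:ℝ) ≤ C := by rw [hCdef]; exact le_max_right _ _
  have hNC : ∀ ρ ∈ Set.Ico (0:ℝ) ρb, |N ρ| ≤ C := by
    intro ρ hρ; rw [hCdef]; exact le_trans (hC0 ρ hρ) (le_max_left _ _)
  obtain ⟨R, εr, Kκ, Kζ, Kw, KU, KQ, hεr0, hKζ0, hKw0, hKU0, hKQ0, hR0, hKκ0, hbd⟩ :=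
    shooting_bounds hadm hss hρb hdom hC hNC
  refine ⟨⟨R + C + Kκ + Kζ + Kw + KU, ?_⟩, ⟨εr, hεr0, fun ρ hρ => (hbd ρ hρ).1⟩, ?_⟩
  · intro ρ hρ
    obtain ⟨h1, h2, h3, h4, h5, h6, h7, h8⟩ := hbd ρ hρ
    have hN' := hNC ρ hρ
    have habs : |r ρ| = r ρ := abs_of_pos (lt_of_lt_of_le hεr0 h1)
    refine ⟨by rw [habs]; linarith, by linarith, by linarith, by linarith, ?_, by linarith⟩
    have : |κ ρ| ≤ Kκ := abs_le.mpr ⟨by linarith, h4⟩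
    linarith
  -- Part 3 : continuation
  by_contra hnlt
  have heq : ρmax = (ρb : EReal) := le_antisymm (not_lt.mp hnlt) hdom
  have hfwd : fwdDom ρmax = Ico (0:ℝ) ρb := by
    rw [heq]; ext x
    simp only [fwdDom, mem_setOf_eq, mem_Ico, EReal.coe_lt_coe_iff]
  have htrans : ∀ t ∈ Ico (0:ℝ) ρb, t ∈ fwdDom ρmax := by
    intro t ht; rw [hfwd]; exact ht
  have hr' : ∀ t ∈ Ico (0:ℝ) ρb, HasDerivWithinAt r (r t * N t) (Ico (0:ℝ) ρb) t := by
    intro t ht; have := hss.ode_r t (htrans t ht); rwa [hfwd] at this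
  have hN' : ∀ t ∈ Ico (0:ℝ) ρb,
      HasDerivWithinAt N (1 - (1 - w t ^ 2) ^ 2 / r t ^ 2 - κ t * N t) (Ico (0:ℝ) ρb) t := by
    intro t ht; have := hss.ode_N t (htrans t ht); rwa [hfwd] at this
  have hw' : ∀ t ∈ Ico (0:ℝ) ρb, HasDerivWithinAt w (r t * U t) (Ico (0:ℝ) ρb) t := by
    intro t ht; have := hss.ode_w t (htrans t ht); rwa [hfwd] at this
  have hU' : ∀ t ∈ Ico (0:ℝ) ρb,
      HasDerivWithinAt U (-(κ t - N t) * U t - w t * (1 - w t ^ 2) / r t) (Ico (0:ℝ) ρb) t := by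
    intro t ht; have := hss.ode_U t (htrans t ht); rwa [hfwd] at this
  have hκ' : ∀ t ∈ Ico (0:ℝ) ρb,
      HasDerivWithinAt κ (1 + 2 * U t ^ 2 - κ t ^ 2) (Ico (0:ℝ) ρb) t := by
    intro t ht; have := hss.ode_κ t (htrans t ht); rwa [hfwd] at this
  have hζ' : ∀ t ∈ Ico (0:ℝ) ρb, HasDerivWithinAt ζ (-(κ t) * ζ t) (Ico (0:ℝ) ρb) t := by
    intro t ht; have := hss.ode_ζ t (htrans t ht); rwa [hfwd] at this
  -- derivative bounds
  have habsr : ∀ t ∈ Ico (0:ℝ) ρb, |r t| ≤ R := by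
    intro t ht
    rw [abs_of_pos (lt_of_lt_of_le hεr0 (hbd t ht).1)]
    exact (hbd t ht).2.1
  have habsκ : ∀ t ∈ Ico (0:ℝ) ρb, |κ t| ≤ Kκ := by
    intro t ht
    rw [abs_of_nonneg (hbd t ht).2.2.1]
    exact (hbd t ht).2.2.2.1
  have hM1 : ∀ t ∈ Ico (0:ℝ) ρb, |r t * N t| ≤ R * C := by
    intro t ht
    rw [abs_mul]
    exact mul_le_mul (habsr t ht) (hNC t ht) (abs_nonneg _) hR0
  have hM2 : ∀ t ∈ Ico (0:ℝ) ρb,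
      |1 - (1 - w t ^ 2) ^ 2 / r t ^ 2 - κ t * N t| ≤ 1 + KQ + Kκ * C := by
    intro t ht
    obtain ⟨h1, h2, h3, h4, h5, h6, h7, h8⟩ := hbd t ht
    have h9 : |κ t * N t| ≤ Kκ * C := by
      rw [abs_mul]
      exact mul_le_mul (habsκ t ht) (hNC t ht) (abs_nonneg _) hKκ0
    have h10 := abs_le.mp h9
    have hQ0 : 0 ≤ (1 - w t ^ 2) ^ 2 / r t ^ 2 := div_nonneg (sq_nonneg _) (sq_nonneg _)
    rw [abs_le]
    constructor <;> linarith
  have hM3 : ∀ t ∈ Ico (0:ℝ) ρb, |r t * U t| ≤ R * KU := by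
    intro t ht
    rw [abs_mul]
    exact mul_le_mul (habsr t ht) (hbd t ht).2.2.2.2.2.2.1 (abs_nonneg _) hR0
  have hM4 : ∀ t ∈ Ico (0:ℝ) ρb,
      |-(κ t - N t) * U t - w t * (1 - w t ^ 2) / r t| ≤
        (Kκ + C) * KU + Kw * (1 + Kw ^ 2) / εr := by
    intro t ht
    obtain ⟨h1, h2, h3, h4, h5, h6, h7, h8⟩ := hbd t ht
    have hN2 := abs_le.mp (hNC t ht)
    have hw2 : w t ^ 2 ≤ Kw ^ 2 := sq_le_sq' (by linarith [(abs_le.mp h6).1]) (abs_le.mp h6).2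
    have hA : |-(κ t - N t) * U t| ≤ (Kκ + C) * KU := by
      rw [abs_mul, abs_neg]
      apply mul_le_mul _ h7 (abs_nonneg _) (by linarith)
      rw [abs_le]
      constructor <;> linarith
    have hB : |w t * (1 - w t ^ 2) / r t| ≤ Kw * (1 + Kw ^ 2) / εr := by
      rw [abs_div, abs_of_pos (lt_of_lt_of_le hεr0 h1), abs_mul]
      apply div_le_div₀ (mul_nonneg hKw0 (by nlinarith)) _ hεr0 h1
      apply mul_le_mul h6 _ (abs_nonneg _) hKw0
      rw [abs_le]
      constructor <;> nlinarith [sq_nonneg (w t)]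
    calc |-(κ t - N t) * U t - w t * (1 - w t ^ 2) / r t|
        ≤ |-(κ t - N t) * U t| + |w t * (1 - w t ^ 2) / r t| := by
          rw [sub_eq_add_neg]
          refine (abs_add_le _ _).trans ?_
          rw [abs_neg]
      _ ≤ (Kκ + C) * KU + Kw * (1 + Kw ^ 2) / εr := add_le_add hA hB
  have hM5 : ∀ t ∈ Ico (0:ℝ) ρb, |1 + 2 * U t ^ 2 - κ t ^ 2| ≤ 1 + 2 * KU ^ 2 + Kκ ^ 2 := by
    intro t ht
    obtain ⟨h1, h2, h3, h4, h5, h6, h7, h8⟩ := hbd t ht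
    have hU2 : U t ^ 2 ≤ KU ^ 2 := sq_le_sq' (by linarith [(abs_le.mp h7).1]) (abs_le.mp h7).2
    have hκ2 : κ t ^ 2 ≤ Kκ ^ 2 := sq_le_sq' (by linarith [(abs_le.mp (habsκ t ht)).1])
      (abs_le.mp (habsκ t ht)).2
    rw [abs_le]
    constructor <;> nlinarith [sq_nonneg (U t), sq_nonneg (κ t)]
  have hM6 : ∀ t ∈ Ico (0:ℝ) ρb, |-(κ t) * ζ t| ≤ Kκ * Kζ := by
    intro t ht
    rw [abs_mul, abs_neg]
    exact mul_le_mul (habsκ t ht) (hbd t ht).2.2.2.2.1 (abs_nonneg _) hKκ0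
  -- limits at ρb
  obtain ⟨L1, hT1, -⟩ := exists_tendsto_of_deriv_bdd hρb hr' hM1
  obtain ⟨L2, hT2, -⟩ := exists_tendsto_of_deriv_bdd hρb hN' hM2
  obtain ⟨L3, hT3, -⟩ := exists_tendsto_of_deriv_bdd hρb hw' hM3
  obtain ⟨L4, hT4, -⟩ := exists_tendsto_of_deriv_bdd hρb hU' hM4
  obtain ⟨L5, hT5, -⟩ := exists_tendsto_of_deriv_bdd hρb hκ' hM5
  obtain ⟨L6, hT6, -⟩ := exists_tendsto_of_deriv_bdd hρb hζ' hM6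
  rw [nhds_Ico_eq hρb] at hT1 hT2 hT3 hT4 hT5 hT6
  haveI hNB : (𝓝[Iio ρb] ρb).NeBot := nhdsLT_neBot ρb
  have hevI : ∀ᶠ t in 𝓝[Iio ρb] ρb, t ∈ Ico (0:ℝ) ρb := by
    rw [← nhds_Ico_eq hρb]
    exact eventually_mem_nhdsWithin
  have hL1ge : εr ≤ L1 := by
    apply ge_of_tendsto hT1
    filter_upwards [hevI] with t ht
    exact (hbd t ht).1
  have hL1ne : L1 ≠ 0 := ne_of_gt (lt_of_lt_of_le hεr0 hL1ge)
  -- local solution through the limit point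
  obtain ⟨floc, hfloc0, ε, hε, hflocd⟩ :=
    ContDiffAt.exists_forall_mem_closedBall_exists_eq_forall_mem_Ioo_hasDerivAt₀ (x₀ := ((L1, L2, L3, L4, L5, L6) : E6))
      (vf_contDiffAt hL1ne) ρb
  have hevr : ∀ᶠ t in 𝓝 ρb, εr / 2 < P1 (floc t) := by
    have hcontrl : ContinuousAt (fun t => P1 (floc t)) ρb :=
      ((hflocd ρb ⟨by linarith, by linarith⟩).fst').continuousAt
    have h0 : εr / 2 < P1 (floc ρb) := by rw [hfloc0]; show εr / 2 < L1; linarith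
    have := hcontrl (Ioi_mem_nhds h0)
    exact eventually_of_mem this (fun y hy => hy)
  obtain ⟨δ0, hδ00, hball⟩ := Metric.eventually_nhds_iff.mp hevr
  obtain ⟨δ, hδdef⟩ : ∃ x : ℝ, x = min (ε / 2) (δ0 / 2) := ⟨_, rfl⟩
  have hδpos : 0 < δ := by rw [hδdef]; exact lt_min (by linarith) (by linarith)
  have hδε : δ ≤ ε / 2 := by rw [hδdef]; exact min_le_left _ _
  have hδδ0 : δ ≤ δ0 / 2 := by rw [hδdef]; exact min_le_right _ _
  have hrl2 : ∀ {t : ℝ}, ρb ≤ t → t < ρb + δ → εr / 2 < P1 (floc t) := by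
    intro t h1 h2
    apply hball
    rw [Real.dist_eq, abs_of_nonneg (by linarith)]
    linarith
  -- the six glued functions
  have hp1 : ∀ (g : ℝ → E6) (v : E6) (t : ℝ), HasDerivAt g v t →
      HasDerivAt (fun s => P1 (g s)) (P1 v) t := fun g v t h => h.fst'
  have hp2 : ∀ (g : ℝ → E6) (v : E6) (t : ℝ), HasDerivAt g v t →
      HasDerivAt (fun s => P2 (g s)) (P2 v) t := fun g v t h => h.snd'.fst'
  have hp3 : ∀ (g : ℝ → E6) (v : E6) (t : ℝ), HasDerivAt g v t →
      HasDerivAt (fun s => P3 (g s)) (P3 v) t := fun g v t h => h.snd'.snd'.fst'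
  have hp4 : ∀ (g : ℝ → E6) (v : E6) (t : ℝ), HasDerivAt g v t →
      HasDerivAt (fun s => P4 (g s)) (P4 v) t := fun g v t h => h.snd'.snd'.snd'.fst'
  have hp5 : ∀ (g : ℝ → E6) (v : E6) (t : ℝ), HasDerivAt g v t →
      HasDerivAt (fun s => P5 (g s)) (P5 v) t := fun g v t h => h.snd'.snd'.snd'.snd'.fst'
  have hp6 : ∀ (g : ℝ → E6) (v : E6) (t : ℝ), HasDerivAt g v t →
      HasDerivAt (fun s => P6 (g s)) (P6 v) t := fun g v t h => h.snd'.snd'.snd'.snd'.snd'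
  have hg1 := glue_deriv hρb hδpos hε hδε hp1 hr'
    (by show Tendsto _ _ (𝓝 (P1 (vf (floc ρb)))); rw [hfloc0]
        exact hT1.mul hT2)
    (by show Tendsto _ _ (𝓝 (P1 (floc ρb))); rw [hfloc0]; exact hT1) hflocd
  have hg2 := glue_deriv hρb hδpos hε hδε hp2 hN'
    (by show Tendsto _ _ (𝓝 (P2 (vf (floc ρb)))); rw [hfloc0]
        exact (tendsto_const_nhds.sub (((tendsto_const_nhds.sub (hT3.pow 2)).pow 2).div
          (hT1.pow 2) (pow_ne_zero 2 hL1ne))).sub (hT5.mul hT2))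
    (by show Tendsto _ _ (𝓝 (P2 (floc ρb))); rw [hfloc0]; exact hT2) hflocd
  have hg3 := glue_deriv hρb hδpos hε hδε hp3 hw'
    (by show Tendsto _ _ (𝓝 (P3 (vf (floc ρb)))); rw [hfloc0]
        exact hT1.mul hT4)
    (by show Tendsto _ _ (𝓝 (P3 (floc ρb))); rw [hfloc0]; exact hT3) hflocd
  have hg4 := glue_deriv hρb hδpos hε hδε hp4 hU'
    (by show Tendsto _ _ (𝓝 (P4 (vf (floc ρb)))); rw [hfloc0]
        exact (((hT5.sub hT2).neg).mul hT4).sub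
          ((hT3.mul (tendsto_const_nhds.sub (hT3.pow 2))).div hT1 hL1ne))
    (by show Tendsto _ _ (𝓝 (P4 (floc ρb))); rw [hfloc0]; exact hT4) hflocd
  have hg5 := glue_deriv hρb hδpos hε hδε hp5 hκ'
    (by show Tendsto _ _ (𝓝 (P5 (vf (floc ρb)))); rw [hfloc0]
        exact (tendsto_const_nhds.add (tendsto_const_nhds.mul (hT4.pow 2))).sub (hT5.pow 2))
    (by show Tendsto _ _ (𝓝 (P5 (floc ρb))); rw [hfloc0]; exact hT5) hflocd
  have hg6 := glue_deriv hρb hδpos hε hδε hp6 hζ'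
    (by show Tendsto _ _ (𝓝 (P6 (vf (floc ρb)))); rw [hfloc0]
        exact (hT5.neg).mul hT6)
    (by show Tendsto _ _ (𝓝 (P6 (floc ρb))); rw [hfloc0]; exact hT6) hflocd
  -- the constraint function χ on the extension
  obtain ⟨χ, hχdef⟩ : ∃ χ : ℝ → ℝ, χ = fun u => P6 (floc u) ^ 2 -
      (1 + 2 * P4 (floc u) ^ 2 - (1 - P3 (floc u) ^ 2) ^ 2 / P1 (floc u) ^ 2 -
        2 * (P5 (floc u) * P2 (floc u)) + P2 (floc u) ^ 2) := ⟨_, rfl⟩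
  have hχρb : χ ρb = 0 := by
    have hTc : Tendsto (fun t => ζ t ^ 2 - (1 + 2 * U t ^ 2 - (1 - w t ^ 2) ^ 2 / r t ^ 2 -
        2 * (κ t * N t) + N t ^ 2)) (𝓝[Iio ρb] ρb)
        (𝓝 (L6 ^ 2 - (1 + 2 * L4 ^ 2 - (1 - L3 ^ 2) ^ 2 / L1 ^ 2 - 2 * (L5 * L2) + L2 ^ 2))) :=
      (hT6.pow 2).sub ((((tendsto_const_nhds.add (tendsto_const_nhds.mul (hT4.pow 2))).sub
        (((tendsto_const_nhds.sub (hT3.pow 2)).pow 2).div (hT1.pow 2) (pow_ne_zero 2 hL1ne))).sub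
        (tendsto_const_nhds.mul (hT5.mul hT2))).add (hT2.pow 2))
    have hzero : Tendsto (fun t => ζ t ^ 2 - (1 + 2 * U t ^ 2 - (1 - w t ^ 2) ^ 2 / r t ^ 2 -
        2 * (κ t * N t) + N t ^ 2)) (𝓝[Iio ρb] ρb) (𝓝 0) := by
      apply Tendsto.congr' _ tendsto_const_nhds
      filter_upwards [hevI] with t ht
      have hc := hss.constraint t (htrans t ht)
      linarith
    have hΦ : L6 ^ 2 - (1 + 2 * L4 ^ 2 - (1 - L3 ^ 2) ^ 2 / L1 ^ 2 - 2 * (L5 * L2) + L2 ^ 2)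
        = 0 := tendsto_nhds_unique hTc hzero
    simp only [hχdef, hfloc0]
    exact hΦ
  have hχder : ∀ s : ℝ, ρb ≤ s → s < ρb + δ → HasDerivAt χ (-2 * P5 (floc s) * χ s) s := by
    intro s h1 h2
    have hsIoo : s ∈ Ioo (ρb - ε) (ρb + ε) := ⟨by linarith, by linarith⟩
    have hD := hflocd s hsIoo
    have d1 : HasDerivAt (fun u => P1 (floc u)) (P1 (vf (floc s))) s := hp1 _ _ _ hD
    have d2 : HasDerivAt (fun u => P2 (floc u)) (P2 (vf (floc s))) s := hp2 _ _ _ hD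
    have d3 : HasDerivAt (fun u => P3 (floc u)) (P3 (vf (floc s))) s := hp3 _ _ _ hD
    have d4 : HasDerivAt (fun u => P4 (floc u)) (P4 (vf (floc s))) s := hp4 _ _ _ hD
    have d5 : HasDerivAt (fun u => P5 (floc u)) (P5 (vf (floc s))) s := hp5 _ _ _ hD
    have d6 : HasDerivAt (fun u => P6 (floc u)) (P6 (vf (floc s))) s := hp6 _ _ _ hD
    have hrpos2 : εr / 2 < P1 (floc s) := hrl2 h1 h2
    have hrne : P1 (floc s) ≠ 0 := ne_of_gt (lt_trans (by linarith) hrpos2)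
    have hQd := (((d3.pow 2).const_sub 1).pow 2).div (d1.pow 2) (pow_ne_zero 2 hrne)
    have tree := (d6.pow 2).sub
      (((((d4.pow 2).const_mul 2).const_add 1).sub hQd).sub ((d5.mul d2).const_mul 2) |>.add
        (d2.pow 2))
    rw [hχdef]
    refine tree.congr_deriv ?_
    simp only [vfP1, vfP2, vfP3, vfP4, vfP5, vfP6, Pi.pow_apply, Pi.sub_apply, Pi.add_apply,
      Pi.mul_apply, Pi.div_apply]
    field_simp
    ring
  have hχzero : ∀ t : ℝ, ρb ≤ t → t < ρb + δ → χ t = 0 := by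
    intro t h1 h2
    rcases eq_or_lt_of_le h1 with rfl | hlt
    · exact hχρb
    have hmem : ∀ x ∈ Icc ρb t, ρb ≤ x ∧ x < ρb + δ :=
      fun x hx => ⟨hx.1, lt_of_le_of_lt hx.2 h2⟩
    have hcont5 : ContinuousOn (fun x => P5 (floc x)) (Icc ρb t) := by
      intro x hx
      have hxIoo : x ∈ Ioo (ρb - ε) (ρb + ε) :=
        ⟨by linarith [(hmem x hx).1], by linarith [(hmem x hx).2]⟩
      exact (hp5 _ _ _ (hflocd x hxIoo)).continuousAt.continuousWithinAt
    obtain ⟨Kl, hKl⟩ := (isCompact_Icc).exists_bound_of_continuousOn hcont5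
    have hKl0 : 0 ≤ Kl := le_trans (norm_nonneg _) (hKl ρb ⟨le_refl _, h1⟩)
    have hχcont : ContinuousOn χ (Icc ρb t) := by
      intro x hx
      exact (hχder x (hmem x hx).1 (hmem x hx).2).continuousAt.continuousWithinAt
    have hgron := norm_le_gronwallBound_of_norm_deriv_right_le (δ := 0) (K := 2 * Kl) (ε := 0)
      (f := χ) (f' := fun u => -2 * P5 (floc u) * χ u) (a := ρb) (b := t)
      hχcont
      (fun u hu => (hχder u hu.1 (lt_trans hu.2 h2)).hasDerivWithinAt)
      (by rw [hχρb]; simp)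
      (by
        intro u hu
        have hKu : |P5 (floc u)| ≤ Kl := by
          have := hKl u ⟨hu.1, hu.2.le⟩
          rwa [Real.norm_eq_abs] at this
        rw [Real.norm_eq_abs, Real.norm_eq_abs, abs_mul, abs_mul]
        have habs2 : |(-2 : ℝ)| = 2 := by norm_num
        rw [habs2]
        nlinarith [abs_nonneg (χ u), abs_nonneg (P5 (floc u)),
          mul_le_mul_of_nonneg_right hKu (abs_nonneg (χ u))])
    have := hgron t ⟨h1, le_refl _⟩
    rw [gronwallBound_ε0_δ0] at this
    exact norm_le_zero_iff.mp this
  -- assemble the contradiction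
  apply hmax (((ρb + δ : ℝ) : EReal))
  · rw [heq]
    exact_mod_cast (by linarith : ρb < ρb + δ)
  have hfwd' : fwdDom (((ρb + δ : ℝ) : EReal)) = Ico (0:ℝ) (ρb + δ) := by
    ext x
    simp only [fwdDom, mem_setOf_eq, mem_Ico, EReal.coe_lt_coe_iff]
  refine ⟨fun s => if s < ρb then r s else P1 (floc s),
    fun s => if s < ρb then N s else P2 (floc s),
    fun s => if s < ρb then w s else P3 (floc s),
    fun s => if s < ρb then U s else P4 (floc s),
    fun s => if s < ρb then κ s else P5 (floc s),
    fun s => if s < ρb then ζ s else P6 (floc s), ?_⟩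
  constructor
  case init_r => rw [if_pos hρb]; exact hss.init_r
  case init_N => rw [if_pos hρb]; exact hss.init_N
  case init_w => rw [if_pos hρb]; exact hss.init_w
  case init_U => rw [if_pos hρb]; exact hss.init_U
  case init_κ => rw [if_pos hρb]; exact hss.init_κ
  case init_ζ => rw [if_pos hρb]; exact hss.init_ζ
  case r_pos =>
    intro ρ hρ
    rw [hfwd'] at hρ
    by_cases h : ρ < ρb
    · rw [if_pos h]; exact hss.r_pos ρ (htrans ρ ⟨hρ.1, h⟩)
    · rw [if_neg h]
      have := hrl2 (not_lt.mp h) hρ.2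
      linarith
  case ode_r =>
    intro ρ hρ
    rw [hfwd'] at hρ ⊢
    have h := hg1 ρ hρ
    rcases lt_or_ge ρ ρb with hc | hc
    · simp only [if_pos hc] at h ⊢; exact h
    · simp only [if_neg (not_lt.mpr hc)] at h ⊢
      rw [vfP1] at h; exact h
  case ode_N =>
    intro ρ hρ
    rw [hfwd'] at hρ ⊢
    have h := hg2 ρ hρ
    rcases lt_or_ge ρ ρb with hc | hc
    · simp only [if_pos hc] at h ⊢; exact h
    · simp only [if_neg (not_lt.mpr hc)] at h ⊢
      rw [vfP2] at h; exact h
  case ode_w =>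
    intro ρ hρ
    rw [hfwd'] at hρ ⊢
    have h := hg3 ρ hρ
    rcases lt_or_ge ρ ρb with hc | hc
    · simp only [if_pos hc] at h ⊢; exact h
    · simp only [if_neg (not_lt.mpr hc)] at h ⊢
      rw [vfP3] at h; exact h
  case ode_U =>
    intro ρ hρ
    rw [hfwd'] at hρ ⊢
    have h := hg4 ρ hρ
    rcases lt_or_ge ρ ρb with hc | hc
    · simp only [if_pos hc] at h ⊢; exact h
    · simp only [if_neg (not_lt.mpr hc)] at h ⊢
      rw [vfP4] at h; exact h
  case ode_κ =>
    intro ρ hρ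
    rw [hfwd'] at hρ ⊢
    have h := hg5 ρ hρ
    rcases lt_or_ge ρ ρb with hc | hc
    · simp only [if_pos hc] at h ⊢; exact h
    · simp only [if_neg (not_lt.mpr hc)] at h ⊢
      rw [vfP5] at h; exact h
  case ode_ζ =>
    intro ρ hρ
    rw [hfwd'] at hρ ⊢
    have h := hg6 ρ hρ
    rcases lt_or_ge ρ ρb with hc | hc
    · simp only [if_pos hc] at h ⊢; exact h
    · simp only [if_neg (not_lt.mpr hc)] at h ⊢
      rw [vfP6] at h; exact h
  case constraint =>
    intro ρ hρ
    rw [hfwd'] at hρ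
    by_cases h : ρ < ρb
    · simp only [if_pos h]
      exact hss.constraint ρ (htrans ρ ⟨hρ.1, h⟩)
    · simp only [if_neg h]
      have h0 := hχzero ρ (not_lt.mp h) hρ.2
      simp only [hχdef] at h0
      linarith
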